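/- arXiv:2311.15334 — 2 statements merged into one kernel-verified Lean document; each statement's English description precedes it below -/
import Mathlib

section
/- Let T be a tree of order n and diameter d, let P = x_1⋯x_{d+1} be a path of length d in T, and let q be the matching number of T − {x_2, …, x_d}. If q ≥ 3, then i(T) ≤ 3^q · 2^{n−d−2q+1} · F_{d+1}. -/
open SimpleGraph

/-- The number of independent sets in a graph (including the empty set). -/
noncomputable def numIndepSets {V : Type*} (G : SimpleGraph V) : ℕ :=
  Nat.card {s : Set V // ∀ u ∈ s, ∀ v ∈ s, ¬ G.Adj u v}

/-- The matching number of a graph: the maximum number of edges in a matching. -/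
noncomputable def matchingNumber {V : Type*} (G : SimpleGraph V) : ℕ :=
  sSup {m : ℕ | ∃ M : G.Subgraph, M.IsMatching ∧ M.edgeSet.ncard = m}

/-- adjacent-true-free boolean lists -/
def noAdj (l : List Bool) : Prop := List.Chain' (fun a b => ¬(a = true ∧ b = true)) l

def goodL : ℕ → List (List Bool)
  | 0 => [[]]
  | 1 => [[false], [true]]
  | (m+2) => ((goodL (m+1)).map (false :: ·)) ++ ((goodL m).map (fun l => true :: false :: l))

lemma length_goodL (m : ℕ) : (goodL m).length = Nat.fib (m+2) := by
  induction m using Nat.strong_induction_on with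
  | _ m ih =>
    match m with
    | 0 => simp [goodL]
    | 1 => simp [goodL, Nat.fib_add_two]
    | (m+2) =>
      have := Nat.fib_add_two (n := m+2)
      simp [goodL, ih (m+1) (by omega), ih m (by omega)]
      simp only [show m+1+2 = m+2+1 from rfl] at *
      omega

lemma length_mem_goodL {m : ℕ} {l : List Bool} (h : l ∈ goodL m) : l.length = m := by
  induction m using Nat.strong_induction_on generalizing l with
  | _ m ih =>
    match m with
    | 0 => simp [goodL] at h; simp [h]
    | 1 => simp [goodL] at h; rcases h with h | h <;> simp [h]
    | (m+2) =>
      simp only [goodL, List.mem_append, List.mem_map] at h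
      rcases h with ⟨a, ha, rfl⟩ | ⟨a, ha, rfl⟩
      · simp [ih (m+1) (by omega) ha]
      · simp [ih m (by omega) ha]

lemma nodup_goodL (m : ℕ) : (goodL m).Nodup := by
  induction m using Nat.strong_induction_on with
  | _ m ih =>
    match m with
    | 0 => simp [goodL]
    | 1 => simp [goodL]
    | (m+2) =>
      refine List.Nodup.append ?_ ?_ ?_
      · exact ((ih (m+1) (by omega)).map (by intro a b h; simpa using h))
      · exact ((ih m (by omega)).map (by intro a b h; simpa using h))
      · intro l hl hl'
        simp only [List.mem_map] at hl hl'
        obtain ⟨a, _, rfl⟩ := hl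
        obtain ⟨b, _, h⟩ := hl'
        simp at h

lemma mem_goodL_of {m : ℕ} {l : List Bool} (hlen : l.length = m) (hna : noAdj l) :
    l ∈ goodL m := by
  induction m using Nat.strong_induction_on generalizing l with
  | _ m ih =>
    match m, l with
    | 0, [] => simp [goodL]
    | 1, [a] => rcases a <;> simp [goodL]
    | (m+2), (false :: l) =>
      simp only [goodL, List.mem_append, List.mem_map]
      exact Or.inl ⟨l, ih (m+1) (by omega) (by simpa using hlen) hna.tail, rfl⟩
    | (m+2), (true :: b :: l) =>
      have hb : b = false := by
        rcases b with _ | _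
        · rfl
        · exact absurd (List.isChain_cons_cons.1 hna).1 (by simp)
      subst hb
      simp only [goodL, List.mem_append, List.mem_map]
      exact Or.inr ⟨l, ih m (by omega) (by simpa using hlen) hna.tail.tail, rfl⟩

lemma card_mem_list {α : Type*} [DecidableEq α] (L : List α) (h : L.Nodup) :
    Nat.card {l : α // l ∈ L} = L.length := by
  have e : {l : α // l ∈ L} ≃ {l : α // l ∈ L.toFinset} :=
    Equiv.subtypeEquivRight (by simp)
  rw [Nat.card_congr e, Nat.card_eq_fintype_card, Fintype.card_coe,
    List.toFinset_card_of_nodup h]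

lemma card_set_subtype {α : Type*} [Fintype α] (s : Finset α) :
    Nat.card (Set {x : α // x ∈ s}) = 2 ^ s.card := by
  classical
  rw [Nat.card_eq_fintype_card, Fintype.card_set, Fintype.card_coe]

lemma card_fun_fin3 {α : Type*} [Fintype α] (s : Finset α) :
    Nat.card ({x : α // x ∈ s} → Fin 3) = 3 ^ s.card := by
  classical
  rw [Nat.card_eq_fintype_card, Fintype.card_fun, Fintype.card_fin, Fintype.card_coe]

lemma exists_matching {W : Type*} [Finite W] (H : SimpleGraph W) :
    ∃ M : H.Subgraph, M.IsMatching ∧ M.edgeSet.ncard = matchingNumber H := by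
  have hne : (⊥ : H.Subgraph).IsMatching := by
    intro v hv; simp [SimpleGraph.Subgraph.verts_bot] at hv
  have h0 : 0 ∈ {m : ℕ | ∃ M : H.Subgraph, M.IsMatching ∧ M.edgeSet.ncard = m} :=
    ⟨⊥, hne, by simp⟩
  have hbdd : BddAbove {m : ℕ | ∃ M : H.Subgraph, M.IsMatching ∧ M.edgeSet.ncard = m} := by
    refine ⟨Nat.card (Sym2 W), ?_⟩
    rintro m ⟨M, _, rfl⟩
    have := Set.ncard_le_ncard (Set.subset_univ M.edgeSet) Set.finite_univ
    simpa [Set.ncard_univ] using this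
  have := Nat.sSup_mem ⟨0, h0⟩ hbdd
  exact this

lemma main_bound {V : Type*} [Fintype V] (G : SimpleGraph V) (il : List V)
    (hnd : il.Nodup) (hch : il.Chain' G.Adj) (q : ℕ) (f : Fin q → V × V)
    (hadj : ∀ i, G.Adj (f i).1 (f i).2)
    (hinj : Function.Injective (fun x : Fin q × Bool => if x.2 then (f x.1).2 else (f x.1).1))
    (hdis : ∀ i, (f i).1 ∉ il ∧ (f i).2 ∉ il) :
    numIndepSets G ≤ Nat.fib (il.length + 2) * 3 ^ q *
      2 ^ (Fintype.card V - (il.length + 2 * q)) := by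
  classical
  set m := il.length with hm
  set ep : Fin q × Bool → V := fun x => if x.2 then (f x.1).2 else (f x.1).1 with hep
  set IL : Finset V := il.toFinset with hIL
  set MV : Finset V := Finset.image ep Finset.univ with hMV
  set Rf : Finset V := (IL ∪ MV)ᶜ with hRf
  have hILcard : IL.card = m := List.toFinset_card_of_nodup hnd
  have hMVcard : MV.card = 2 * q := by
    rw [hMV, Finset.card_image_of_injective _ hinj, Finset.card_univ]
    simp [mul_comm]
  have hdisj : Disjoint IL MV := by
    rw [Finset.disjoint_right]
    rintro v hv hvIL
    simp only [hMV, Finset.mem_image, Finset.mem_univ, true_and] at hv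
    obtain ⟨⟨i, b⟩, rfl⟩ := hv
    rw [hIL, List.mem_toFinset] at hvIL
    rcases b with _ | _
    · exact (hdis i).1 (by simpa [hep] using hvIL)
    · exact (hdis i).2 (by simpa [hep] using hvIL)
  have hRcard : Rf.card = Fintype.card V - (m + 2 * q) := by
    rw [hRf, Finset.card_compl, Finset.card_union_of_disjoint hdisj, hILcard, hMVcard]
  -- well-definedness of the list component
  have hgood : ∀ s : {s : Set V // ∀ a ∈ s, ∀ b ∈ s, ¬ G.Adj a b},
      il.map (fun v => decide (v ∈ s.1)) ∈ goodL m := by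
    intro s
    refine mem_goodL_of (by simp [hm]) ?_
    unfold noAdj
    unfold List.Chain' at hch ⊢
    rw [List.isChain_map]
    refine hch.imp ?_
    intro a b hab
    simp only [decide_eq_true_eq]
    rintro ⟨ha, hb⟩
    exact s.2 a ha b hb hab
  have hmain : numIndepSets G ≤ Nat.card
      ({l : List Bool // l ∈ goodL m} × (Fin q → Fin 3) × Set {x : V // x ∈ Rf}) := by
    haveI : Finite {l : List Bool // l ∈ goodL m} := (goodL m).finite_toSet.to_subtype
    refine Nat.card_le_card_of_injective
      (fun s => (⟨il.map (fun v => decide (v ∈ s.1)), hgood s⟩,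
        fun i => if (f i).1 ∈ s.1 then (1 : Fin 3) else if (f i).2 ∈ s.1 then 2 else 0,
        {x : {x : V // x ∈ Rf} | x.1 ∈ s.1})) ?_
    intro s t h
    simp only [Prod.mk.injEq, Subtype.mk.injEq] at h
    obtain ⟨h1, h2, h3⟩ := h
    have key : ∀ r : {s : Set V // ∀ a ∈ s, ∀ b ∈ s, ¬ G.Adj a b}, ∀ i : Fin q,
        (((f i).1 ∈ r.1) ↔ (if (f i).1 ∈ r.1 then (1 : Fin 3) else if (f i).2 ∈ r.1 then 2 else 0) = 1)
        ∧ (((f i).2 ∈ r.1) ↔ (if (f i).1 ∈ r.1 then (1 : Fin 3) else if (f i).2 ∈ r.1 then 2 else 0) = 2) := by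
      intro r i
      by_cases ha : (f i).1 ∈ r.1
      · have hb : (f i).2 ∉ r.1 := fun hb => r.2 _ ha _ hb (hadj i)
        simp [ha, hb]
      · by_cases hb : (f i).2 ∈ r.1 <;> simp [ha, hb]
    apply Subtype.ext
    ext v
    by_cases hv : v ∈ il
    · have := List.map_inj_left.mp h1 v hv
      simpa [decide_eq_decide] using this
    · by_cases hv2 : ∃ x : Fin q × Bool, ep x = v
      · obtain ⟨⟨i, b⟩, rfl⟩ := hv2
        have hst := congrFun h2 i
        rcases b with _ | _
        · show (f i).1 ∈ s.1 ↔ (f i).1 ∈ t.1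
          rw [(key s i).1, (key t i).1, hst]
        · show (f i).2 ∈ s.1 ↔ (f i).2 ∈ t.1
          rw [(key s i).2, (key t i).2, hst]
      · have hvR : v ∈ Rf := by
          rw [hRf, Finset.mem_compl, Finset.mem_union]
          push_neg
          constructor
          · rw [hIL, List.mem_toFinset]; exact hv
          · rw [hMV]
            simp only [Finset.mem_image, Finset.mem_univ, true_and]
            rintro ⟨x, hx⟩
            exact hv2 ⟨x, hx⟩
        have := Set.ext_iff.mp h3 ⟨v, hvR⟩
        simpa using this
  calc numIndepSets G ≤ _ := hmain
    _ = Nat.fib (m + 2) * 3 ^ q * 2 ^ (Fintype.card V - (m + 2 * q)) := by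
        rw [Nat.card_prod, Nat.card_prod, card_mem_list _ (nodup_goodL m), length_goodL,
          card_set_subtype, hRcard]
        rw [Nat.card_eq_fintype_card, Fintype.card_fun]
        simp [mul_assoc]

lemma not_mem_dropLast_of_nodup {α : Type*} {l : List α} (h : l.Nodup) {x : α}
    (hx : l.getLast? = some x) : x ∉ l.dropLast := by
  obtain ⟨l', rfl⟩ := List.getLast?_eq_some_iff.mp hx
  rw [List.dropLast_concat]
  have h3 := List.disjoint_of_nodup_append h
  intro hmem
  exact h3 hmem (by simp)

theorem stmt13 {V : Type*} [Fintype V] (G : SimpleGraph V) (hT : G.IsTree)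
    (n d q : ℕ) (hn : Fintype.card V = n) (hd : G.diam = d)
    {u w : V} (p : G.Walk u w) (hp : p.IsPath) (hlen : p.length = d)
    (hq : matchingNumber (SimpleGraph.induce
        {v : V | v ∉ p.support ∨ v = u ∨ v = w} G) = q)
    (hq3 : 3 ≤ q) :
    numIndepSets G ≤ 3 ^ q * 2 ^ (n - d - 2 * q + 1) * Nat.fib (d + 1) := by
  classical
  set V' : Set V := {v : V | v ∉ p.support ∨ v = u ∨ v = w} with hV'
  set il : List V := p.support.tail.dropLast with hil
  have hsuplen : p.support.length = d + 1 := by rw [SimpleGraph.Walk.length_support, hlen]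
  have hillen : il.length = d - 1 := by
    rw [hil, List.length_dropLast, List.length_tail, hsuplen]
    omega
  have hsupnd : p.support.Nodup := hp.support_nodup
  have hnd : il.Nodup :=
    hsupnd.sublist ((List.dropLast_sublist _).trans (List.tail_sublist _))
  have hch : il.Chain' G.Adj := (p.isChain_adj_support.tail).dropLast
  -- vertices of V' are not in il
  have hu_not : u ∉ p.support.tail := by
    have := hsupnd
    rw [p.support_eq_cons] at this
    exact (List.nodup_cons.mp this).1
  have hw_not : w ∉ il := by
    by_cases htne : p.support.tail = []
    · simp [hil, htne]
    · have htnd : p.support.tail.Nodup := by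
        have := hsupnd
        rw [p.support_eq_cons] at this
        exact (List.nodup_cons.mp this).2
      have hgl : p.support.tail.getLast? = some w := by
        have h1 : p.support.getLast? = some w := by
          rw [List.getLast?_eq_getLast (by simp)]
          exact congrArg some p.getLast_support
        rw [p.support_eq_cons, List.getLast?_cons] at h1
        rcases h2 : p.support.tail.getLast? with _ | x
        · exact absurd (List.getLast?_eq_none_iff.mp h2) htne
        · rw [h2] at h1; simpa using h1
      exact not_mem_dropLast_of_nodup htnd hgl
  have hV'il : ∀ v : V, v ∈ V' → v ∉ il := by
    intro v hv
    rcases hv with h | h | h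
    · intro hmem
      exact h (List.mem_of_mem_tail (List.dropLast_subset _ hmem))
    · subst h; intro hmem; exact hu_not (List.dropLast_subset _ hmem)
    · subst h; exact hw_not
  -- extract the matching
  obtain ⟨M, hM, hMcard⟩ := exists_matching (SimpleGraph.induce V' G)
  rw [hq] at hMcard
  have hfin : M.edgeSet.Finite := Set.toFinite _
  have hEcard : hfin.toFinset.card = q := by
    rw [← Set.ncard_eq_toFinset_card _ hfin, hMcard]
  set g : Fin q → Sym2 ↥V' := fun i => (hfin.toFinset.equivFin.symm (Fin.cast hEcard.symm i)).1
    with hgdef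
  have hg_mem : ∀ i, g i ∈ M.edgeSet := by
    intro i
    have := (hfin.toFinset.equivFin.symm (Fin.cast hEcard.symm i)).2
    rwa [Set.Finite.mem_toFinset] at this
  have hg_inj : Function.Injective g := by
    intro i j hij
    have := Subtype.ext hij
    have := hfin.toFinset.equivFin.symm.injective this
    simpa [Fin.ext_iff] using congrArg Fin.val this
  have hex : ∀ e ∈ M.edgeSet, ∃ ab : ↥V' × ↥V', M.Adj ab.1 ab.2 ∧ s(ab.1, ab.2) = e := by
    intro e
    refine Sym2.ind (fun a b h => ⟨(a, b), SimpleGraph.Subgraph.mem_edgeSet.mp h, rfl⟩) e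
  choose ab hab hs using fun i => hex (g i) (hg_mem i)
  set f : Fin q → V × V := fun i => ((((ab i).1 : ↥V') : V), (((ab i).2 : ↥V') : V)) with hfdef
  have hadj : ∀ i, G.Adj (f i).1 (f i).2 := by
    intro i
    have h := M.adj_sub (hab i)
    simpa [hfdef] using h
  have key : ∀ i j : Fin q, ∀ v : ↥V', (v = (ab i).1 ∨ v = (ab i).2) →
      (v = (ab j).1 ∨ v = (ab j).2) → i = j := by
    intro i j v hi hj
    have hvi : ∃ x, M.Adj v x ∧ s(v, x) = g i := by
      rcases hi with rfl | rfl
      · exact ⟨(ab i).2, hab i, hs i⟩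
      · exact ⟨(ab i).1, (hab i).symm, by rw [Sym2.eq_swap]; exact hs i⟩
    have hvj : ∃ x, M.Adj v x ∧ s(v, x) = g j := by
      rcases hj with rfl | rfl
      · exact ⟨(ab j).2, hab j, hs j⟩
      · exact ⟨(ab j).1, (hab j).symm, by rw [Sym2.eq_swap]; exact hs j⟩
    obtain ⟨x, hx, hxe⟩ := hvi
    obtain ⟨y, hy, hye⟩ := hvj
    obtain ⟨z, hz, huz⟩ := hM (M.edge_vert hx)
    have hxy : x = y := (huz x hx).trans (huz y hy).symm
    apply hg_inj
    rw [← hxe, ← hye, hxy]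
  have hne_ab : ∀ i, (ab i).1 ≠ (ab i).2 := by
    intro i h
    exact (M.adj_sub (hab i)).ne h
  have hinj : Function.Injective
      (fun x : Fin q × Bool => if x.2 then (f x.1).2 else (f x.1).1) := by
    rintro ⟨i, bi⟩ ⟨j, bj⟩ hxy
    simp only [hfdef] at hxy
    rcases bi with _ | _ <;> rcases bj with _ | _ <;>
      simp only [if_pos, if_neg, Bool.false_eq_true, not_false_eq_true, ite_true, ite_false] at hxy
    · have hv : (ab i).1 = (ab j).1 := Subtype.ext hxy
      have := key i j (ab i).1 (Or.inl rfl) (Or.inl (by rw [hv]))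
      subst this; rfl
    · have hv : (ab i).1 = (ab j).2 := Subtype.ext hxy
      have hij := key i j (ab i).1 (Or.inl rfl) (Or.inr (by rw [hv]))
      subst hij
      exact absurd hv (hne_ab i)
    · have hv : (ab i).2 = (ab j).1 := Subtype.ext hxy
      have hij := key i j (ab i).2 (Or.inr rfl) (Or.inl (by rw [hv]))
      subst hij
      exact absurd hv.symm (hne_ab i)
    · have hv : (ab i).2 = (ab j).2 := Subtype.ext hxy
      have := key i j (ab i).2 (Or.inr rfl) (Or.inr (by rw [hv]))
      subst this; rfl
  have hdis : ∀ i, (f i).1 ∉ il ∧ (f i).2 ∉ il := by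
    intro i
    exact ⟨hV'il _ (ab i).1.2, hV'il _ (ab i).2.2⟩
  have hb := main_bound G il hnd hch q f hadj hinj hdis
  rw [hillen, hn] at hb
  refine hb.trans ?_
  have hfib : Nat.fib (d - 1 + 2) ≤ Nat.fib (d + 1) := by
    match d with
    | 0 => decide
    | (e+1) => exact le_of_eq (by congr 1)
  have hpow : (2:ℕ) ^ (n - (d - 1 + 2 * q)) ≤ 2 ^ (n - d - 2 * q + 1) :=
    Nat.pow_le_pow_right (by norm_num) (by omega)
  calc Nat.fib (d - 1 + 2) * 3 ^ q * 2 ^ (n - (d - 1 + 2 * q))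
      ≤ Nat.fib (d + 1) * 3 ^ q * 2 ^ (n - d - 2 * q + 1) :=
        Nat.mul_le_mul (Nat.mul_le_mul hfib le_rfl) hpow
    _ = 3 ^ q * 2 ^ (n - d - 2 * q + 1) * Nat.fib (d + 1) := by ring
end

section
/- If n ∈ ℕ is the number of independent sets of some tree T that is not a star, then n can be written as n = 2^t · a + b where t ≥ 1, and there exists a tree T' with a vertex x such that a = i(T') and b = i(T' − x); in particular b ≤ a ≤ 2b. -/
open SimpleGraph

namespace StmtAux

variable {V : Type*}

/-- number of independent sets contained in `A` -/
noncomputable def cnt (G : SimpleGraph V) (A : Set V) : ℕ :=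
  Nat.card {s : Set V // s ⊆ A ∧ ∀ u ∈ s, ∀ v ∈ s, ¬ G.Adj u v}

lemma numIndepSets_eq_cnt (G : SimpleGraph V) : numIndepSets G = cnt G Set.univ :=
  Nat.card_congr (Equiv.subtypeEquivRight (fun s => by simp))

lemma cnt_mono [Finite V] (G : SimpleGraph V) {A B : Set V} (h : A ⊆ B) :
    cnt G A ≤ cnt G B :=
  Nat.card_le_card_of_injective
    (fun s => ⟨s.1, s.2.1.trans h, s.2.2⟩)
    (fun s t hst => Subtype.ext (by simpa using congrArg Subtype.val hst))

lemma cnt_split [Finite V] (G : SimpleGraph V) (A : Set V) (x : V) (hx : x ∈ A) :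
    cnt G A = cnt G (A \ {x}) + cnt G {v | v ∈ A ∧ v ≠ x ∧ ¬ G.Adj x v} := by
  simp only [cnt]
  rw [← Nat.card_sum]
  refine Nat.card_congr (Equiv.ofBijective ?_ ⟨?_, ?_⟩).symm
  · rintro (⟨s, hs, hind⟩ | ⟨s, hs, hind⟩)
    · exact ⟨s, fun v hv => (hs hv).1, hind⟩
    · refine ⟨insert x s, ?_, ?_⟩
      · rintro v (rfl | hv)
        · exact hx
        · exact (hs hv).1
      · rintro u (rfl | hu) v (rfl | hv)
        · exact fun h => G.irrefl h
        · exact (hs hv).2.2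
        · exact fun h => (hs hu).2.2 h.symm
        · exact hind u hu v hv
  · rintro (⟨s, hs, hind⟩ | ⟨s, hs, hind⟩) (⟨t, ht, hind'⟩ | ⟨t, ht, hind'⟩) h
    · simp only [Subtype.mk.injEq] at h
      simp [h]
    · exfalso
      simp only [Subtype.mk.injEq] at h
      have : x ∈ s := h ▸ Set.mem_insert x t
      exact (hs this).2 rfl
    · exfalso
      simp only [Subtype.mk.injEq] at h
      have : x ∈ t := h.symm ▸ Set.mem_insert x s
      exact (ht this).2 rfl
    · simp only [Subtype.mk.injEq] at h
      congr 1
      refine Subtype.ext (Set.ext fun v => ⟨fun hv => ?_, fun hv => ?_⟩)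
      · have : v ∈ insert x t := h ▸ Set.mem_insert_of_mem x hv
        rcases this with rfl | hv'
        · exact absurd rfl (hs hv).2.1
        · exact hv'
      · have : v ∈ insert x s := h.symm ▸ Set.mem_insert_of_mem x hv
        rcases this with rfl | hv'
        · exact absurd rfl (ht hv).2.1
        · exact hv'
  · rintro ⟨s, hs, hind⟩
    by_cases hxs : x ∈ s
    · refine ⟨Sum.inr ⟨s \ {x}, ?_, ?_⟩, ?_⟩
      · rintro v ⟨hv, hvx⟩
        exact ⟨hs hv, hvx, hind x hxs v hv⟩
      · rintro u ⟨hu, _⟩ v ⟨hv, _⟩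
        exact hind u hu v hv
      · refine Subtype.ext ?_
        simp [Set.insert_diff_singleton, Set.insert_eq_self.2 hxs]
    · exact ⟨Sum.inl ⟨s, fun v hv => ⟨hs hv, fun hvx => hxs (hvx ▸ hv)⟩, hind⟩, rfl⟩

lemma cnt_prod [Finite V] (G : SimpleGraph V) {B C : Set V}
    (hdisj : ∀ v, v ∈ B → v ∈ C → False)
    (hBC : ∀ b ∈ B, ∀ c ∈ C, ¬ G.Adj b c) :
    cnt G (B ∪ C) = cnt G B * cnt G C := by
  simp only [cnt]
  rw [← Nat.card_prod]
  refine Nat.card_congr (Equiv.ofBijective ?_ ⟨?_, ?_⟩).symm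
  · rintro ⟨⟨p, hp, hindp⟩, ⟨q, hq, hindq⟩⟩
    refine ⟨p ∪ q, Set.union_subset_union hp hq, ?_⟩
    rintro u (hu | hu) v (hv | hv)
    · exact hindp u hu v hv
    · exact hBC u (hp hu) v (hq hv)
    · exact fun h => hBC v (hp hv) u (hq hu) h.symm
    · exact hindq u hu v hv
  · rintro ⟨⟨p, hp, _⟩, ⟨q, hq, _⟩⟩ ⟨⟨p', hp', _⟩, ⟨q', hq', _⟩⟩ h
    simp only [Subtype.mk.injEq] at h
    have key : ∀ (X Y : Set V), (∀ v, v ∈ X → v ∈ Y → False) →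
        ∀ (r r' t t' : Set V), r ⊆ X → r' ⊆ X → t ⊆ Y → t' ⊆ Y →
        r ∪ t = r' ∪ t' → r = r' := by
      intro X Y hXY r r' t t' hr hr' ht ht' heq
      ext v
      constructor
      · intro hv
        have hv2 : v ∈ r' ∪ t' := heq ▸ Set.mem_union_left t hv
        rcases hv2 with h' | h'
        · exact h'
        · exact absurd (ht' h') (fun hc => hXY v (hr hv) hc)
      · intro hv
        have hv2 : v ∈ r ∪ t := heq.symm ▸ Set.mem_union_left t' hv
        rcases hv2 with h' | h'
        · exact h'
        · exact absurd (ht h') (fun hc => hXY v (hr' hv) hc)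
    have h1 : p = p' := key B C hdisj p p' q q' hp hp' hq hq' h
    have h2 : q = q' := by
      refine key C B (fun v hvC hvB => hdisj v hvB hvC) q q' p p' hq hq' hp hp' ?_
      rw [Set.union_comm q p, Set.union_comm q' p']
      exact h
    simp only [Prod.mk.injEq, Subtype.mk.injEq]
    exact ⟨h1, h2⟩
  · rintro ⟨s, hs, hind⟩
    refine ⟨⟨⟨s ∩ B, Set.inter_subset_right, fun u hu v hv => hind u hu.1 v hv.1⟩,
      ⟨s ∩ C, Set.inter_subset_right, fun u hu v hv => hind u hu.1 v hv.1⟩⟩,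
      Subtype.ext ?_⟩
    show s ∩ B ∪ s ∩ C = s
    rw [← Set.inter_union_distrib_left, Set.inter_eq_left.2 hs]

lemma cnt_pow [Finite V] (G : SimpleGraph V) {A : Set V}
    (h : ∀ a ∈ A, ∀ b ∈ A, ¬ G.Adj a b) :
    cnt G A = 2 ^ Nat.card A := by
  have e : {s : Set V // s ⊆ A ∧ ∀ u ∈ s, ∀ v ∈ s, ¬ G.Adj u v} ≃ Set ↥A :=
    { toFun := fun s => Subtype.val ⁻¹' s.1
      invFun := fun t => ⟨Subtype.val '' t, by rintro v ⟨v', _, rfl⟩; exact v'.2,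
        by rintro u ⟨u', _, rfl⟩ v ⟨v', _, rfl⟩; exact h u' u'.2 v' v'.2⟩
      left_inv := fun s => Subtype.ext (by
        show Subtype.val '' (Subtype.val ⁻¹' s.1) = s.1
        rw [Set.image_preimage_eq_of_subset (by rw [Subtype.range_coe]; exact s.2.1)])
      right_inv := fun t => Set.preimage_image_eq t Subtype.val_injective }
  rw [cnt, Nat.card_congr e]
  have : Fintype ↥A := Fintype.ofFinite _
  rw [Nat.card_eq_fintype_card, Fintype.card_set, Nat.card_eq_fintype_card]

lemma cnt_induce [Finite V] (G : SimpleGraph V) (A : Set V) (B : Set ↥A) :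
    cnt (G.induce A) B = cnt G (Subtype.val '' B) := by
  have hBr : ∀ {t : Set V}, t ⊆ Subtype.val '' B → t ⊆ Set.range (Subtype.val : ↥A → V) :=
    fun ht => ht.trans (Set.image_subset_range _ _)
  refine Nat.card_congr
    { toFun := fun s => ⟨Subtype.val '' s.1, Set.image_mono s.2.1, ?_⟩
      invFun := fun t => ⟨Subtype.val ⁻¹' t.1, ?_, ?_⟩
      left_inv := fun s => Subtype.ext (Set.preimage_image_eq s.1 Subtype.val_injective)
      right_inv := fun t => Subtype.ext (Set.image_preimage_eq_of_subset (hBr t.2.1)) }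
  · rintro u ⟨u', hu', rfl⟩ v ⟨v', hv', rfl⟩ hadj
    exact s.2.2 u' hu' v' hv' hadj
  · intro v hv
    obtain ⟨b, hb, hbv⟩ := t.2.1 hv
    rwa [← Subtype.val_injective hbv]
  · intro u hu v hv hadj
    exact t.2.2 u.1 hu v.1 hv hadj

lemma numIndepSets_induce_eq_cnt [Finite V] (G : SimpleGraph V) (A : Set V) :
    numIndepSets (G.induce A) = cnt G A := by
  rw [numIndepSets_eq_cnt, cnt_induce, Set.image_univ, Subtype.range_coe]

lemma numIndepSets_congr {V : Type*} {W : Type*} {G : SimpleGraph V} {H : SimpleGraph W}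
    (e : G ≃g H) : numIndepSets G = numIndepSets H := by
  refine Nat.card_congr (Equiv.subtypeEquiv (Equiv.Set.congr e.toEquiv) fun s => ?_)
  constructor
  · rintro hind u ⟨u', hu', rfl⟩ v ⟨v', hv', rfl⟩ hadj
    exact hind u' hu' v' hv' (e.map_rel_iff.1 hadj)
  · intro hind u hu v hv hadj
    have := hind (e u) ⟨u, hu, rfl⟩ (e v) ⟨v, hv, rfl⟩
    exact this (e.map_rel_iff.2 hadj)

section Structure

variable {V : Type*}

/-- an interior vertex of a path has two distinct neighbors on the path -/
lemma path_interior {G : SimpleGraph V} {a b v : V} (p : G.Walk a b) (hp : p.IsPath)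
    (hv : v ∈ p.support) (hva : v ≠ a) (hvb : v ≠ b) :
    ∃ x y, x ≠ y ∧ G.Adj v x ∧ G.Adj v y ∧ x ∈ p.support ∧ y ∈ p.support := by
  classical
  set q1 := p.takeUntil v hv with hq1
  set q2 := p.dropUntil v hv with hq2
  obtain ⟨x, hxadj, q1', hq1'⟩ := Walk.exists_eq_cons_of_ne hva q1.reverse
  obtain ⟨y, hyadj, q2', hq2'⟩ := Walk.exists_eq_cons_of_ne hvb q2
  have hxs : x ∈ q1.support := by
    have : x ∈ q1.reverse.support := by
      rw [hq1']
      simp [Walk.support_cons, q1'.start_mem_support]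
    rwa [Walk.support_reverse, List.mem_reverse] at this
  have hys : y ∈ q2.support := by
    rw [hq2']
    simp [Walk.support_cons, q2'.start_mem_support]
  have hxe : s(v, x) ∈ q1.edges := by
    have : s(v, x) ∈ q1.reverse.edges := by rw [hq1']; simp [Walk.edges_cons]
    rwa [Walk.edges_reverse, List.mem_reverse] at this
  have hye : s(v, y) ∈ q2.edges := by rw [hq2']; simp [Walk.edges_cons]
  refine ⟨x, y, ?_, hxadj, hyadj, Walk.support_takeUntil_subset p hv hxs,
    Walk.support_dropUntil_subset p hv hys⟩
  rintro rfl
  have hsplit : p.edges = q1.edges ++ q2.edges := by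
    rw [← Walk.edges_append, Walk.take_spec p hv]
  have hnd := hp.isTrail.edges_nodup
  rw [hsplit, List.nodup_append] at hnd
  exact hnd.2.2 _ hxe _ hye rfl

lemma reachable_induce {G : SimpleGraph V} {S : Set V} {a b : V} (p : G.Walk a b) :
    (∀ v ∈ p.support, v ∈ S) → ∀ (ha : a ∈ S) (hb : b ∈ S),
      (G.induce S).Reachable ⟨a, ha⟩ ⟨b, hb⟩ := by
  induction p with
  | nil => intro _ ha hb; rfl
  | @cons a c b h q ih =>
    intro hsub ha hb
    have hc : c ∈ S := hsub c (by simp [Walk.support_cons, q.start_mem_support])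
    have hadj : (G.induce S).Adj ⟨a, ha⟩ ⟨c, hc⟩ := by
      simp only [comap_adj, Function.Embedding.coe_subtype]
      exact h
    exact (hadj.reachable).trans
      (ih (fun v hv => hsub v (by simp [Walk.support_cons, hv])) hc hb)

/-- in a tree, a vertex has at most one neighbor at distance ≤ its own from a root -/
lemma tree_unique_parent {T : SimpleGraph V} (hT : T.IsTree) (r : V) {u y1 y2 : V}
    (h1 : T.Adj u y1) (h2 : T.Adj u y2)
    (hd1 : T.dist r y1 ≤ T.dist r u) (hd2 : T.dist r y2 ≤ T.dist r u) : y1 = y2 := by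
  have hconn := hT.isConnected
  have key : ∀ (y : V) (hy : T.Adj u y), T.dist r y ≤ T.dist r u →
      ∃ (g : T.Walk r y), g.IsPath ∧ u ∉ g.support := by
    classical
    intro y hy hdy
    obtain ⟨g, hgp, hgl⟩ := hconn.exists_path_of_dist r y
    refine ⟨g, hgp, fun husup => ?_⟩
    have h1' : T.dist r u ≤ (g.takeUntil u husup).length := SimpleGraph.dist_le _
    have h2' : 1 ≤ (g.dropUntil u husup).length := by
      by_contra hl
      push_neg at hl
      have : (g.dropUntil u husup).length = 0 := by omega
      have := Walk.eq_of_length_eq_zero this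
      exact hy.ne (this)
    have hlen : (g.takeUntil u husup).length + (g.dropUntil u husup).length = g.length := by
      rw [← Walk.length_append, Walk.take_spec g husup]
    omega
  obtain ⟨g1, hg1p, hg1u⟩ := key y1 h1 hd1
  obtain ⟨g2, hg2p, hg2u⟩ := key y2 h2 hd2
  have hp1 : (Walk.cons h1 g1.reverse).IsPath := by
    rw [Walk.cons_isPath_iff]
    exact ⟨hg1p.reverse, by rwa [Walk.support_reverse, List.mem_reverse]⟩
  have hp2 : (Walk.cons h2 g2.reverse).IsPath := by
    rw [Walk.cons_isPath_iff]
    exact ⟨hg2p.reverse, by rwa [Walk.support_reverse, List.mem_reverse]⟩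
  have huniq := hT.existsUnique_path u r
  have heq : Walk.cons h1 g1.reverse = Walk.cons h2 g2.reverse :=
    (huniq.unique hp1 hp2)
  have := congrArg (fun w => w.getVert 1) heq
  simpa [Walk.getVert_cons_succ, Walk.getVert_zero] using this

end Structure

section Small

variable {V : Type*}

lemma small_case {T : SimpleGraph V} (hT : T.IsTree)
    (huniq : ∀ v y z : V, T.Adj v y → T.Adj v z → y = z) :
    ∃ m, Nonempty (T ≃g completeBipartiteGraph (Fin 1) (Fin m)) := by
  classical
  have hne : Nonempty V := hT.isConnected.nonempty
  obtain ⟨a⟩ := hne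
  by_cases hc : ∃ c, T.Adj a c
  · obtain ⟨c, hac⟩ := hc
    have hanec : a ≠ c := hac.ne
    have hV : ∀ v : V, v = a ∨ v = c := by
      intro v
      obtain ⟨p⟩ := hT.isConnected.preconnected a v
      obtain ⟨q, hq⟩ : ∃ q : T.Walk a v, q.IsPath := ⟨p.toPath.1, p.toPath.2⟩
      cases q with
      | nil => exact Or.inl rfl
      | @cons _ x _ h1 q1 =>
        have hxc : x = c := huniq a x c h1 hac
        subst hxc
        cases q1 with
        | nil => exact Or.inr rfl
        | @cons _ z _ h2 q2 =>
          have hza : z = a := huniq x z a h2 h1.symm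
          subst hza
          exfalso
          rw [Walk.isPath_def] at hq
          simp only [Walk.support_cons, List.nodup_cons] at hq
          exact hq.1 (List.mem_cons_of_mem _ q2.start_mem_support)
    refine ⟨1, ⟨⟨{ toFun := fun v => if v = a then Sum.inl 0 else Sum.inr 0,
                   invFun := Sum.elim (fun _ => a) (fun _ => c),
                   left_inv := ?_,
                   right_inv := ?_ }, ?_⟩⟩⟩
    · intro v
      rcases hV v with rfl | rfl
      · simp
      · simp [hanec.symm]
    · rintro (i | i)
      · simp [Subsingleton.elim (0 : Fin 1) i]
      · simp [hanec.symm, Subsingleton.elim (0 : Fin 1) i]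
    · intro v w
      rcases hV v with rfl | rfl <;> rcases hV w with rfl | rfl <;>
        simp [hanec, hanec.symm, hac, hac.symm]
  · push_neg at hc
    have hall : ∀ v : V, v = a := by
      intro v
      obtain ⟨p⟩ := hT.isConnected.preconnected a v
      cases p with
      | nil => rfl
      | cons h q => exact absurd h (hc _)
    refine ⟨0, ⟨⟨{ toFun := fun _ => Sum.inl 0,
                   invFun := fun _ => a,
                   left_inv := fun v => (hall v).symm,
                   right_inv := ?_ }, ?_⟩⟩⟩
    · rintro (i | i)
      · simp [Subsingleton.elim (0 : Fin 1) i]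
      · exact i.elim0
    · intro v w
      have hv := hall v
      have hw := hall w
      subst hv hw
      simp

end Small

section Good

variable {V : Type*}

lemma exists_good_pair [Fintype V] {T : SimpleGraph V} (hT : T.IsTree)
    (hbranch : ∃ u y z : V, y ≠ z ∧ T.Adj u y ∧ T.Adj u z) :
    ∃ u w, T.Adj u w ∧ (∃ l, T.Adj u l ∧ l ≠ w) ∧
      ∀ y, T.Adj u y → y ≠ w → ∀ z, T.Adj y z → z = u := by
  classical
  obtain ⟨u0, hu0⟩ : ∃ u0, u0 ∈ Finset.univ.filter
      (fun v => ∃ y z : V, y ≠ z ∧ T.Adj v y ∧ T.Adj v z) := by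
    obtain ⟨u, y, z, h⟩ := hbranch
    exact ⟨u, by simp only [Finset.mem_filter, Finset.mem_univ, true_and]; exact ⟨y, z, h⟩⟩
  obtain ⟨r⟩ : Nonempty V := ⟨u0⟩
  obtain ⟨u, huD, hmax⟩ := Finset.exists_max_image
    (Finset.univ.filter (fun v => ∃ y z : V, y ≠ z ∧ T.Adj v y ∧ T.Adj v z))
    (fun v => T.dist r v) ⟨u0, hu0⟩
  simp only [Finset.mem_filter, Finset.mem_univ, true_and] at huD
  obtain ⟨y0, z0, hyz, hy0, hz0⟩ := huD
  have leafy : ∀ y, T.Adj u y → T.dist r u < T.dist r y → ∀ z, T.Adj y z → z = u := by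
    intro y hy hdist z hz
    by_contra hzu
    have hyD : y ∈ Finset.univ.filter
        (fun v => ∃ a b : V, a ≠ b ∧ T.Adj v a ∧ T.Adj v b) := by
      simp only [Finset.mem_filter, Finset.mem_univ, true_and]
      exact ⟨z, u, hzu, hz, hy.symm⟩
    exact absurd (hmax y hyD) (not_le.2 hdist)
  by_cases hw : ∃ w, T.Adj u w ∧ T.dist r w ≤ T.dist r u
  · obtain ⟨w, hw1, hw2⟩ := hw
    refine ⟨u, w, hw1, ?_, ?_⟩
    · by_cases hy0w : y0 = w
      · exact ⟨z0, hz0, fun h => hyz (hy0w.trans h.symm)⟩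
      · exact ⟨y0, hy0, hy0w⟩
    · intro y hy hyw
      rcases le_or_gt (T.dist r y) (T.dist r u) with hd | hd
      · exact absurd (tree_unique_parent hT r hy hw1 hd hw2) hyw
      · exact leafy y hy hd
  · push_neg at hw
    refine ⟨u, y0, hy0, ⟨z0, hz0, hyz.symm⟩, ?_⟩
    intro y hy _
    exact leafy y hy (hw y hy)

end Good

section MainTree

variable {V : Type*}

lemma induced_tree [Fintype V] {T : SimpleGraph V} (hT : T.IsTree) {u w : V}
    (huw : T.Adj u w)
    (hleaf : ∀ y, T.Adj u y → y ≠ w → ∀ z, T.Adj y z → z = u) :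
    (T.induce {v : V | v ≠ u ∧ ¬(T.Adj u v ∧ v ≠ w)}).IsTree := by
  classical
  set S : Set V := {v : V | v ≠ u ∧ ¬(T.Adj u v ∧ v ≠ w)} with hS
  have hwS : w ∈ S := ⟨huw.ne', fun h => h.2 rfl⟩
  constructor
  · -- connected
    rw [connected_iff]
    refine ⟨fun x y => ?_, ⟨⟨w, hwS⟩⟩⟩
    obtain ⟨p, hp, -⟩ := hT.isConnected.exists_path_of_dist x.1 y.1
    have hLsup : ∀ l, T.Adj u l → l ≠ w → l ∉ p.support := by
      intro l hl hlw hmem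
      have hla : l ≠ x.1 := fun h => x.2.2 (h ▸ ⟨hl, hlw⟩)
      have hlb : l ≠ y.1 := fun h => y.2.2 (h ▸ ⟨hl, hlw⟩)
      obtain ⟨x', y', hxy, hax, hay, -, -⟩ := path_interior p hp hmem hla hlb
      exact hxy ((hleaf l hl hlw x' hax).trans (hleaf l hl hlw y' hay).symm)
    have hup : u ∉ p.support := by
      intro hmem
      have hua : u ≠ x.1 := fun h => x.2.1 h.symm
      have hub : u ≠ y.1 := fun h => y.2.1 h.symm
      obtain ⟨x', y', hxy, hax, hay, hxs, hys⟩ := path_interior p hp hmem hua hub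
      have hx'w : x' = w := by
        by_contra h
        exact hLsup x' hax h hxs
      have hy'w : y' = w := by
        by_contra h
        exact hLsup y' hay h hys
      exact hxy (hx'w.trans hy'w.symm)
    have hsub : ∀ v ∈ p.support, v ∈ S := by
      intro v hv
      refine ⟨fun h => hup (h ▸ hv), fun h => hLsup v h.1 h.2 hv⟩
    have := reachable_induce p hsub x.2 y.2
    exact this
  · -- acyclic
    intro v c hc
    have : (c.map (SimpleGraph.Embedding.induce S).toHom).IsCycle :=
      hc.map (Subtype.val_injective)
    exact hT.IsAcyclic _ this

end MainTree

def induce_iso_congr {α β : Type*} {G : SimpleGraph α} {H : SimpleGraph β}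
    (f : G ≃g H) (B : Set β) : (G.induce (⇑f ⁻¹' B)) ≃g (H.induce B) where
  toEquiv := f.toEquiv.subtypeEquiv fun _ => Iff.rfl
  map_rel_iff' := by
    intro a b
    simp only [comap_adj, Function.Embedding.coe_subtype, Equiv.subtypeEquiv_apply]
    exact f.map_rel_iff

end StmtAux

open StmtAux in
theorem stmt15 {V : Type*} [Fintype V] (T : SimpleGraph V) (hT : T.IsTree)
    (hstar : ∀ m : ℕ, ¬ Nonempty (T ≃g completeBipartiteGraph (Fin 1) (Fin m)))
    (n : ℕ) (hn : numIndepSets T = n) :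
    ∃ (t a b : ℕ), 1 ≤ t ∧ n = 2 ^ t * a + b ∧ b ≤ a ∧ a ≤ 2 * b ∧
      ∃ (W : Type) (_ : Fintype W) (T' : SimpleGraph W) (x : W),
        T'.IsTree ∧ a = numIndepSets T' ∧
          b = numIndepSets (SimpleGraph.induce {y : W | y ≠ x} T') := by
  classical
  by_cases hbranch : ∃ u y z : V, y ≠ z ∧ T.Adj u y ∧ T.Adj u z
  case neg =>
    push_neg at hbranch
    have huniq : ∀ v y z : V, T.Adj v y → T.Adj v z → y = z := by
      intro v y z hy hz
      by_contra hne
      exact hbranch v y z hne hy hz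
    obtain ⟨m, hm⟩ := small_case hT huniq
    exact absurd hm (hstar m)
  case pos =>
    obtain ⟨u, w, huw, ⟨l0, hl0, hl0w⟩, hleaf⟩ := exists_good_pair hT hbranch
    have hwS : w ∈ {v : V | v ≠ u ∧ ¬(T.Adj u v ∧ v ≠ w)} := ⟨huw.ne', fun h => h.2 rfl⟩
    -- set identities
    have e1 : Set.univ \ {u} =
        {y : V | T.Adj u y ∧ y ≠ w} ∪ {v : V | v ≠ u ∧ ¬(T.Adj u v ∧ v ≠ w)} := by
      ext v
      simp only [Set.mem_diff, Set.mem_univ, Set.mem_singleton_iff, true_and,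
        Set.mem_union, Set.mem_setOf_eq]
      constructor
      · intro hv
        by_cases h : T.Adj u v ∧ v ≠ w
        · exact Or.inl h
        · exact Or.inr ⟨hv, h⟩
      · rintro (h | h)
        · exact h.1.ne'
        · exact h.1
    have e2 : {v : V | v ∈ Set.univ ∧ v ≠ u ∧ ¬T.Adj u v} =
        {v : V | v ≠ u ∧ ¬(T.Adj u v ∧ v ≠ w)} \ {w} := by
      ext v
      simp only [Set.mem_setOf_eq, Set.mem_univ, true_and, Set.mem_diff,
        Set.mem_singleton_iff]
      constructor
      · rintro ⟨h1, h2⟩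
        exact ⟨⟨h1, fun h => h2 h.1⟩, fun h => h2 (h ▸ huw)⟩
      · rintro ⟨⟨h1, h2⟩, h3⟩
        exact ⟨h1, fun h => h2 ⟨h, h3⟩⟩
    have hLS_nonadj : ∀ b ∈ {y : V | T.Adj u y ∧ y ≠ w},
        ∀ c ∈ {v : V | v ≠ u ∧ ¬(T.Adj u v ∧ v ≠ w)}, ¬T.Adj b c := by
      intro b hb c hc hadj
      exact hc.1 (hleaf b hb.1 hb.2 c hadj)
    have hLdisj : ∀ v, v ∈ {y : V | T.Adj u y ∧ y ≠ w} →
        v ∈ {v : V | v ≠ u ∧ ¬(T.Adj u v ∧ v ≠ w)} → False := by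
      intro v hv hv'
      exact hv'.2 hv
    have hLL : ∀ a ∈ {y : V | T.Adj u y ∧ y ≠ w}, ∀ b ∈ {y : V | T.Adj u y ∧ y ≠ w},
        ¬T.Adj a b := by
      intro a ha b hb hadj
      exact hb.1.ne' (hleaf a ha.1 ha.2 b hadj)
    have hm1 : 1 ≤ Nat.card ↥{y : V | T.Adj u y ∧ y ≠ w} := by
      haveI : Nonempty ↥{y : V | T.Adj u y ∧ y ≠ w} := ⟨⟨l0, hl0, hl0w⟩⟩
      exact Nat.card_pos
    -- the counting chain
    have hcount : n = 2 ^ (Nat.card ↥{y : V | T.Adj u y ∧ y ≠ w}) *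
        cnt T {v : V | v ≠ u ∧ ¬(T.Adj u v ∧ v ≠ w)} +
        cnt T ({v : V | v ≠ u ∧ ¬(T.Adj u v ∧ v ≠ w)} \ {w}) := by
      rw [← hn, numIndepSets_eq_cnt,
        cnt_split T Set.univ u (Set.mem_univ u), e1, e2,
        cnt_prod T hLdisj hLS_nonadj, cnt_pow T hLL]
    have hba : cnt T ({v : V | v ≠ u ∧ ¬(T.Adj u v ∧ v ≠ w)} \ {w}) ≤
        cnt T {v : V | v ≠ u ∧ ¬(T.Adj u v ∧ v ≠ w)} :=
      cnt_mono T Set.diff_subset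
    have hab : cnt T {v : V | v ≠ u ∧ ¬(T.Adj u v ∧ v ≠ w)} ≤
        2 * cnt T ({v : V | v ≠ u ∧ ¬(T.Adj u v ∧ v ≠ w)} \ {w}) := by
      rw [cnt_split T {v : V | v ≠ u ∧ ¬(T.Adj u v ∧ v ≠ w)} w hwS, two_mul]
      refine Nat.add_le_add_left (cnt_mono T ?_) _
      rintro v ⟨hv1, hv2, _⟩
      exact ⟨hv1, hv2⟩
    -- the tree T'
    have htree0 : (T.induce {v : V | v ≠ u ∧ ¬(T.Adj u v ∧ v ≠ w)}).IsTree :=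
      induced_tree hT huw hleaf
    haveI : Fintype ↥{v : V | v ≠ u ∧ ¬(T.Adj u v ∧ v ≠ w)} := Fintype.ofFinite _
    set S : Set V := {v : V | v ≠ u ∧ ¬(T.Adj u v ∧ v ≠ w)} with hSdef
    set e : ↥S ≃ Fin (Fintype.card ↥S) := Fintype.equivFin ↥S with hedef
    set T' : SimpleGraph (Fin (Fintype.card ↥S)) :=
      (T.induce S).comap e.symm.toEmbedding with hT'def
    set iso : T' ≃g (T.induce S) := SimpleGraph.Iso.comap e.symm (T.induce S) with hiso
    have hT'tree : T'.IsTree := by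
      constructor
      · exact iso.connected_iff.2 htree0.isConnected
      · intro v c hc
        exact htree0.IsAcyclic _
          ((Walk.map_isCycle_iff_of_injective (f := iso.toHom) iso.injective).2 hc)
    refine ⟨Nat.card ↥{y : V | T.Adj u y ∧ y ≠ w}, cnt T S, cnt T (S \ {w}),
      hm1, hcount, hba, hab,
      Fin (Fintype.card ↥S), inferInstance, T', e ⟨w, hwS⟩, hT'tree, ?_, ?_⟩
    · rw [numIndepSets_congr iso, numIndepSets_induce_eq_cnt]
    · have hsets : {y : Fin (Fintype.card ↥S) | y ≠ e ⟨w, hwS⟩} =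
          (⇑iso) ⁻¹' {z : ↥S | z ≠ (⟨w, hwS⟩ : ↥S)} := by
        ext y
        simp only [Set.mem_setOf_eq, Set.mem_preimage]
        have hy : (⇑iso) y = e.symm y := by rw [hiso]; rfl
        rw [hy, not_iff_not]
        exact (Equiv.symm_apply_eq e).symm
      rw [hsets, numIndepSets_congr (induce_iso_congr iso {z : ↥S | z ≠ (⟨w, hwS⟩ : ↥S)}),
        numIndepSets_induce_eq_cnt, cnt_induce]
      congr 1
      ext v
      constructor
      · rintro ⟨hv, hvw⟩
        exact ⟨⟨v, hv⟩, fun h => hvw (congrArg Subtype.val h), rfl⟩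
      · rintro ⟨z, hz, rfl⟩
        exact ⟨z.2, fun h => hz (Subtype.ext h)⟩
end
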